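/- Let A ∈ ℝ^{N×d} and C be a symmetric positive-definite d×d matrix. Then the squared spectral norm satisfies ‖C^{-1/2}(AᵀA + C⁻¹)⁻¹ Aᵀ‖₂² ≤ 1/4. -/

import Mathlib

open Matrix

set_option maxHeartbeats 1000000

/-- The spectral norm (operator 2-norm) of a real matrix. -/
noncomputable def spec {n m : ℕ} (A : Matrix (Fin n) (Fin m) ℝ) : ℝ :=
  ‖LinearMap.toContinuousLinearMap (Matrix.toEuclideanLin A)‖

/-- The square root of a positive semidefinite matrix, as `Matrix.PosSemidef.sqrt` was defined
in the older Mathlib (that declaration no longer exists). -/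
noncomputable def posSemidefSqrt {n : ℕ} {M : Matrix (Fin n) (Fin n) ℝ} (hM : M.PosSemidef) :
    Matrix (Fin n) (Fin n) ℝ :=
  (hM.1.eigenvectorUnitary : Matrix (Fin n) (Fin n) ℝ) * diagonal (fun i => √(hM.1.eigenvalues i)) *
    (star hM.1.eigenvectorUnitary : Matrix (Fin n) (Fin n) ℝ)

lemma key_aux {N d : ℕ} (G : Matrix (Fin N) (Fin d) ℝ) :
    spec ((Gᵀ * G + 1)⁻¹ * Gᵀ) ≤ 1 / 2 := by
  set K : Matrix (Fin d) (Fin d) ℝ := Gᵀ * G + 1 with hKdef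
  have hGG : (Gᵀ * G).PosSemidef := by
    have := Matrix.posSemidef_conjTranspose_mul_self G
    rwa [Matrix.conjTranspose_eq_transpose_of_trivial] at this
  have hK : K.PosDef := Matrix.PosDef.posSemidef_add hGG Matrix.PosDef.one
  have hKdet : IsUnit K.det := (Matrix.isUnit_iff_isUnit_det K).mp hK.isUnit
  apply ContinuousLinearMap.opNorm_le_bound _ (by norm_num)
  intro y
  set M : Matrix (Fin d) (Fin N) ℝ := K⁻¹ * Gᵀ with hMdef
  set y' : Fin N → ℝ := (WithLp.equiv 2 (Fin N → ℝ)) y with hy'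
  set x' : Fin d → ℝ := M.mulVec y' with hx'
  have hKx : K.mulVec x' = Gᵀ.mulVec y' := by
    rw [hx', Matrix.mulVec_mulVec, hMdef, ← Matrix.mul_assoc,
      Matrix.mul_nonsing_inv _ hKdet, Matrix.one_mul]
  set g : Fin N → ℝ := G.mulVec x' with hg
  have hid : g ⬝ᵥ g + x' ⬝ᵥ x' = g ⬝ᵥ y' := by
    have h1 : x' ⬝ᵥ (K.mulVec x') = x' ⬝ᵥ (Gᵀ.mulVec y') := by rw [hKx]
    rw [hKdef, Matrix.add_mulVec, Matrix.one_mulVec, dotProduct_add,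
      ← Matrix.mulVec_mulVec, Matrix.dotProduct_mulVec, Matrix.vecMul_transpose,
      Matrix.dotProduct_mulVec x' Gᵀ, Matrix.vecMul_transpose] at h1
    exact h1
  have hCS : (g ⬝ᵥ y') ^ 2 ≤ (g ⬝ᵥ g) * (y' ⬝ᵥ y') := by
    have h := Finset.sum_mul_sq_le_sq_mul_sq Finset.univ g y'
    have e1 : g ⬝ᵥ g = ∑ i, g i ^ 2 := by simp [dotProduct, sq]
    have e2 : y' ⬝ᵥ y' = ∑ i, y' i ^ 2 := by simp [dotProduct, sq]
    rw [e1, e2]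
    simpa [dotProduct] using h
  have hgg : 0 ≤ g ⬝ᵥ g := Finset.sum_nonneg fun i _ => mul_self_nonneg _
  have hxx : 0 ≤ x' ⬝ᵥ x' := Finset.sum_nonneg fun i _ => mul_self_nonneg _
  have hyy : 0 ≤ y' ⬝ᵥ y' := Finset.sum_nonneg fun i _ => mul_self_nonneg _
  have hmain : x' ⬝ᵥ x' ≤ (1 / 4) * (y' ⬝ᵥ y') := by
    rcases eq_or_lt_of_le hgg with h | h
    · nlinarith [hid, hCS]
    · nlinarith [hid, hCS, sq_nonneg (g ⬝ᵥ g - x' ⬝ᵥ x'), mul_pos h h]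
  have hnx : ‖(Matrix.toEuclideanLin M) y‖ ^ 2 = x' ⬝ᵥ x' := by
    rw [← real_inner_self_eq_norm_sq]
    rw [real_inner_self_eq_norm_sq, EuclideanSpace.real_norm_sq_eq]
    simp [Matrix.toEuclideanLin_apply, dotProduct, sq, hx', hy']
  have hny : ‖y‖ ^ 2 = y' ⬝ᵥ y' := by
    rw [← real_inner_self_eq_norm_sq]
    rw [real_inner_self_eq_norm_sq, EuclideanSpace.real_norm_sq_eq]
    simp [dotProduct, sq, hy']
  have h2 : ‖(Matrix.toEuclideanLin M) y‖ ^ 2 ≤ (1/4) * ‖y‖ ^ 2 := by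
    rw [hnx, hny]; exact hmain
  have h3 : ‖(LinearMap.toContinuousLinearMap (Matrix.toEuclideanLin M)) y‖
      = ‖(Matrix.toEuclideanLin M) y‖ := rfl
  rw [h3]
  nlinarith [norm_nonneg ((Matrix.toEuclideanLin M) y), norm_nonneg y]

theorem stmt_7 {N d : ℕ} (A : Matrix (Fin N) (Fin d) ℝ)
    (C : Matrix (Fin d) (Fin d) ℝ) (hC : C.PosDef) :
    spec ((posSemidefSqrt hC.posSemidef)⁻¹ * (Aᵀ * A + C⁻¹)⁻¹ * Aᵀ) ^ 2 ≤ 1 / 4 := by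
  set D := posSemidefSqrt hC.posSemidef with hDdef
  have hDD : D * D = C := by
    have hS := hC.posSemidef.1.spectral_theorem
    have hU := Unitary.coe_star_mul_self hC.posSemidef.1.eigenvectorUnitary
    rw [Unitary.conjStarAlgAut_apply] at hS
    rw [hDdef, posSemidefSqrt]
    conv_rhs => rw [hS]
    simp only [Matrix.mul_assoc]
    rw [← Matrix.mul_assoc (star _ : Matrix (Fin d) (Fin d) ℝ), hU, Matrix.one_mul,
      ← Matrix.mul_assoc (diagonal _), diagonal_mul_diagonal]
    congr 3
    funext i
    simp [Real.mul_self_sqrt (hC.posSemidef.eigenvalues_nonneg i)]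
  have hDsym : Dᵀ = D := by
    rw [hDdef, posSemidefSqrt]
    simp [Matrix.transpose_mul, Matrix.star_eq_conjTranspose, Matrix.mul_assoc]
  have hCdet : (0:ℝ) < C.det := hC.det_pos
  have hDdet : IsUnit D.det := by
    have h : D.det * D.det = C.det := by rw [← Matrix.det_mul, hDD]
    refine isUnit_iff_ne_zero.mpr fun h0 => ?_
    rw [h0, mul_zero] at h; exact absurd h.symm (ne_of_gt hCdet)
  set G : Matrix (Fin N) (Fin d) ℝ := A * D with hGdef
  have hGT : Gᵀ = D * Aᵀ := by rw [hGdef, Matrix.transpose_mul, hDsym]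
  set K : Matrix (Fin d) (Fin d) ℝ := Gᵀ * G + 1 with hKdef
  have hGG : (Gᵀ * G).PosSemidef := by
    have := Matrix.posSemidef_conjTranspose_mul_self G
    rwa [Matrix.conjTranspose_eq_transpose_of_trivial] at this
  have hK : K.PosDef := Matrix.PosDef.posSemidef_add hGG Matrix.PosDef.one
  have hKdet : IsUnit K.det := (Matrix.isUnit_iff_isUnit_det K).mp hK.isUnit
  set B : Matrix (Fin d) (Fin d) ℝ := Aᵀ * A + C⁻¹ with hBdef
  have hCinv : C⁻¹ = D⁻¹ * D⁻¹ := by rw [← hDD, Matrix.mul_inv_rev]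
  have hDBD : D * B * D = K := by
    rw [hBdef, hKdef, hGT, hGdef, hCinv]
    rw [Matrix.mul_add, Matrix.add_mul]
    congr 1
    · rw [← Matrix.mul_assoc, ← Matrix.mul_assoc]
    · rw [← Matrix.mul_assoc, Matrix.mul_nonsing_inv _ hDdet, Matrix.one_mul,
        Matrix.nonsing_inv_mul _ hDdet]
  have hB : B = D⁻¹ * K * D⁻¹ := by
    rw [← hDBD]
    simp only [Matrix.mul_assoc]
    rw [Matrix.nonsing_inv_mul_cancel_left _ _ hDdet, Matrix.mul_nonsing_inv _ hDdet,
      Matrix.mul_one]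
  have hBinv : B⁻¹ = D * K⁻¹ * D := by
    apply Matrix.inv_eq_right_inv
    rw [hB]
    simp only [Matrix.mul_assoc]
    rw [Matrix.nonsing_inv_mul_cancel_left _ _ hDdet,
      Matrix.mul_nonsing_inv_cancel_left _ _ hKdet,
      Matrix.nonsing_inv_mul _ hDdet]
  have hMeq : D⁻¹ * B⁻¹ * Aᵀ = K⁻¹ * Gᵀ := by
    rw [hBinv, ← Matrix.mul_assoc, ← Matrix.mul_assoc,
      Matrix.nonsing_inv_mul _ hDdet, Matrix.one_mul, Matrix.mul_assoc, ← hGT]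
  rw [hMeq]
  have h1 := key_aux G
  have h0 : 0 ≤ spec ((Gᵀ * G + 1)⁻¹ * Gᵀ) := norm_nonneg _
  nlinarith
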